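/- Lemma 2.4 (antidiagonal structure): For block sizes (r_1,…,r_u) with partial sums R_k, the base S of the nilradical root set M contains, for each i with 1 ≤ i ≤ u−1, all roots of the form (R_i − m + 1, R_i + m) for m = 1, 2, …, min(r_i, r_{i+1}); i.e., the roots corresponding to the antidiagonal elements of the superdiagonal block X_{i,i+1} (from the lower-left corner upward) belong to S. -/

import Mathlib

/-- `γ > ξ` : the difference `γ − ξ` is a positive root of `gl(n)`. -/
def rootGT (γ ξ : ℕ × ℕ) : Prop :=
  (γ.1 = ξ.1 ∧ ξ.2 < γ.2) ∨ (γ.2 = ξ.2 ∧ γ.1 < ξ.1)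

/-- `R k = r_1 + ⋯ + r_k`. -/
def partialSum (r : ℕ → ℕ) (k : ℕ) : ℕ := ∑ i ∈ Finset.Icc 1 k, r i

/-- The root set `M` of the nilradical determined by block sizes `(r_1, …, r_u)`. -/
def nilradicalRoots (u : ℕ) (r : ℕ → ℕ) : Set (ℕ × ℕ) :=
  {p | 1 ≤ p.1 ∧ p.1 < p.2 ∧ p.2 ≤ partialSum r u ∧
    ¬ ∃ k, 1 ≤ k ∧ k ≤ u ∧ partialSum r (k - 1) < p.1 ∧ p.2 ≤ partialSum r k}

/-- A subset `S ⊆ M` is a base. -/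
def IsBase (u : ℕ) (r : ℕ → ℕ) (S : Set (ℕ × ℕ)) : Prop :=
  S ⊆ nilradicalRoots u r ∧
  (∀ γ ∈ S, ∀ ξ ∈ S, γ ≠ ξ → ¬ (rootGT γ ξ ∨ rootGT ξ γ)) ∧
  (∀ γ ∈ nilradicalRoots u r, γ ∉ S → ∃ ξ ∈ S, rootGT γ ξ)

/-- Antidiagonal structure of the base in superdiagonal blocks: for each `i`,
`1 ≤ i ≤ u − 1`, the base contains the roots `(R_i − m + 1, R_i + m)` for
`m = 1, …, min(r_i, r_{i+1})`, i.e. the antidiagonal of the block `X_{i,i+1}`. -/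
theorem base_antidiagonal (u : ℕ) (r : ℕ → ℕ) (hr : ∀ i, 1 ≤ i → i ≤ u → 0 < r i)
    (S : Set (ℕ × ℕ)) (hS : IsBase u r S)
    (i : ℕ) (hi1 : 1 ≤ i) (hi2 : i ≤ u - 1)
    (m : ℕ) (hm1 : 1 ≤ m) (hm2 : m ≤ min (r i) (r (i + 1))) :
    (partialSum r i - m + 1, partialSum r i + m) ∈ S := by
  obtain ⟨hSM, hinc, hcov⟩ := hS
  have hu : 2 ≤ u := by omega
  have hmono : ∀ a b : ℕ, a ≤ b → partialSum r a ≤ partialSum r b := by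
    intro a b hab
    exact Finset.sum_le_sum_of_subset (Finset.Icc_subset_Icc_right hab)
  have hstep : ∀ k : ℕ, partialSum r (k + 1) = partialSum r k + r (k + 1) := by
    intro k
    exact Finset.sum_Icc_succ_top (by omega : 1 ≤ k + 1) r
  have hRi : partialSum r i = partialSum r (i - 1) + r i := by
    have h := hstep (i - 1)
    rwa [show i - 1 + 1 = i by omega] at h
  have hri : r i ≤ partialSum r i := by omega
  have hRi1 : partialSum r (i + 1) = partialSum r i + r (i + 1) := hstep i
  have hRu : partialSum r (i + 1) ≤ partialSum r u := hmono _ _ (by omega)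
  have hmem : ∀ n, 1 ≤ n → n ≤ min (r i) (r (i + 1)) →
      (partialSum r i - n + 1, partialSum r i + n) ∈ nilradicalRoots u r := by
    intro n h1 h2
    refine ⟨by omega, by simp only []; omega, by simp only []; omega, ?_⟩
    rintro ⟨k, hk1, hk2, hlt, hle⟩
    simp only [] at hlt hle
    rcases le_or_gt k i with h | h
    · have := hmono k i h
      omega
    · have := hmono i (k - 1) (by omega)
      omega
  have main : ∀ n, 1 ≤ n → n ≤ min (r i) (r (i + 1)) →
      (partialSum r i - n + 1, partialSum r i + n) ∈ S := by
    intro n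
    induction n using Nat.strong_induction_on with
    | _ n ih =>
      intro h1 h2
      by_contra hns
      obtain ⟨ξ, hξS, hgt⟩ := hcov _ (hmem n h1 h2) hns
      obtain ⟨hξ1, hξ2, hξ3, hξ4⟩ := hSM hξS
      rcases hgt with ⟨he, hlt⟩ | ⟨he, hlt⟩
      · -- ξ.1 = R i − n + 1, ξ.2 < R i + n
        simp only [] at he hlt
        have hblock : ¬ (partialSum r (i - 1) < ξ.1 ∧ ξ.2 ≤ partialSum r i) := by
          intro h
          exact hξ4 ⟨i, hi1, by omega, h.1, h.2⟩
        have h5 : partialSum r i < ξ.2 := by omega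
        set m' := ξ.2 - partialSum r i with hm'
        have hγ' : (partialSum r i - m' + 1, partialSum r i + m') ∈ S :=
          ih m' (by omega) (by omega) (by omega)
        have hne : ξ ≠ (partialSum r i - m' + 1, partialSum r i + m') := by
          intro hh
          have := congrArg Prod.fst hh
          simp only [] at this
          omega
        exact hinc ξ hξS _ hγ' hne (Or.inl (Or.inr ⟨by simp only []; omega, by simp only []; omega⟩))
      · -- ξ.2 = R i + n, ξ.1 > R i − n + 1
        simp only [] at he hlt
        have hblock : ¬ (partialSum r i < ξ.1 ∧ ξ.2 ≤ partialSum r (i + 1)) := by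
          intro h
          exact hξ4 ⟨i + 1, by omega, by omega, by simpa using h.1, h.2⟩
        have h5 : ξ.1 ≤ partialSum r i := by omega
        set m' := partialSum r i - ξ.1 + 1 with hm'
        have hγ' : (partialSum r i - m' + 1, partialSum r i + m') ∈ S :=
          ih m' (by omega) (by omega) (by omega)
        have hne : ξ ≠ (partialSum r i - m' + 1, partialSum r i + m') := by
          intro hh
          have := congrArg Prod.snd hh
          simp only [] at this
          omega
        exact hinc ξ hξS _ hγ' hne (Or.inl (Or.inl ⟨by simp only []; omega, by simp only []; omega⟩))
  exact main m hm1 hm2
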